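/- arXiv:1702.01878 — 9 statements merged into one kernel-verified Lean document; each statement's English description precedes it below -/
import Mathlib

section
/- For every vertex p_i (i ∈ {1,2,3,4}) of the 4-path P_4 and every order-label l ∈ {1,2,3,4}, the ordered Ramsey number of the (p_i,l)-ordering of P_4 equals 5. That is: (a) every ordered 2-coloring on 5 vertices contains distinct vertices x1,x2,x3,x4 such that the edges {x1,x2},{x2,x3},{x3,x4} all have the same color and x_i is the l-th smallest of x1,x2,x3,x4; and (b) there exists an ordered 2-coloring on 4 vertices containing no such configuration. -/
def col (b0 b1 b2 b3 b4 b5 b6 b7 b8 b9 : Bool) (a c : Fin 5) : Bool :=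
  let m := min a.1 c.1
  let M := max a.1 c.1
  let k := (9*m - m*m)/2 + M - m - 1
  if k = 0 then b0 else if k = 1 then b1 else if k = 2 then b2 else
  if k = 3 then b3 else if k = 4 then b4 else if k = 5 then b5 else
  if k = 6 then b6 else if k = 7 then b7 else if k = 8 then b8 else b9

def cands : List (Fin 4 → Fin 5) := [
  ![0,1,2,3],
  ![1,0,2,3],
  ![2,3,0,1],
  ![3,2,0,1],
  ![0,1,3,4],
  ![1,0,3,4],
  ![2,4,0,1],
  ![4,2,1,0],
  ![1,3,2,4],
  ![2,0,4,3],
  ![3,1,2,0],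
  ![3,0,2,4],
  ![0,4,3,2],
  ![4,2,3,1],
  ![1,0,4,2],
  ![4,3,1,0],
  ![3,4,1,0],
  ![1,2,4,3],
  ![4,3,2,1],
  ![1,4,0,3],
  ![3,0,4,1],
  ![0,2,1,3],
  ![2,4,3,0],
  ![0,2,3,4],
  ![2,0,1,4],
  ![1,4,2,0],
  ![3,2,4,1],
  ![4,3,0,2],
  ![2,1,4,3],
  ![3,4,0,2],
  ![0,1,4,2],
  ![1,2,0,3],
  ![3,0,1,2],
  ![0,3,1,4],
  ![3,2,1,4],
  ![0,2,4,1],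
  ![1,4,2,3],
  ![3,2,0,4],
  ![4,0,2,1],
  ![4,1,3,0],
  ![1,2,3,0],
  ![1,4,3,2],
  ![4,2,0,3],
  ![0,2,4,3],
  ![0,3,2,4],
  ![1,2,4,0],
  ![4,0,3,1],
  ![4,1,0,2]]

set_option maxRecDepth 100000 in
set_option maxHeartbeats 4000000 in
lemma candsNe : ∀ x ∈ cands,
    x 0 ≠ x 1 ∧ x 0 ≠ x 2 ∧ x 0 ≠ x 3 ∧ x 1 ≠ x 2 ∧ x 1 ≠ x 3 ∧ x 2 ≠ x 3 := by decide

lemma inj_aux {x : Fin 4 → Fin 5}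
    (h : x 0 ≠ x 1 ∧ x 0 ≠ x 2 ∧ x 0 ≠ x 3 ∧ x 1 ≠ x 2 ∧ x 1 ≠ x 3 ∧ x 2 ≠ x 3) :
    Function.Injective x := by
  obtain ⟨h1, h2, h3, h4, h5, h6⟩ := h
  intro a b hab
  fin_cases a <;> fin_cases b <;>
    first
      | rfl
      | exact absurd hab h1 | exact absurd hab h2 | exact absurd hab h3
      | exact absurd hab h4 | exact absurd hab h5 | exact absurd hab h6
      | exact absurd hab.symm h1 | exact absurd hab.symm h2 | exact absurd hab.symm h3
      | exact absurd hab.symm h4 | exact absurd hab.symm h5 | exact absurd hab.symm h6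

lemma candsInj : ∀ x ∈ cands, Function.Injective x :=
  fun x hx => inj_aux (candsNe x hx)

set_option maxHeartbeats 1000000 in
lemma colFlip (b0 b1 b2 b3 b4 b5 b6 b7 b8 b9 : Bool) (a c : Fin 5) :
    col (!b0) (!b1) (!b2) (!b3) (!b4) (!b5) (!b6) (!b7) (!b8) (!b9) a c
      = !(col b0 b1 b2 b3 b4 b5 b6 b7 b8 b9 a c) := by
  fin_cases a <;> fin_cases c <;> rfl

set_option maxHeartbeats 1000000 in
lemma colEq (c : Fin 5 → Fin 5 → Bool) (hsym : ∀ a b, c a b = c b a) (a b : Fin 5)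
    (hab : a ≠ b) :
    col (c 0 1) (c 0 2) (c 0 3) (c 0 4) (c 1 2) (c 1 3) (c 1 4) (c 2 3) (c 2 4) (c 3 4) a b
      = c a b := by
  fin_cases a <;> fin_cases b <;>
    first
      | exact absurd rfl hab
      | rfl
      | exact hsym _ _

lemma card_comp_rev (x : Fin 4 → Fin 5) (v : Fin 5) :
    (Finset.univ.filter fun j => x (3 - j) < v).card =
    (Finset.univ.filter fun j => x j < v).card := by
  apply Finset.card_bij (fun j _ => 3 - j)
  · intro a ha
    simp only [Finset.mem_filter, Finset.mem_univ, true_and] at *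
    exact ha
  · intro a _ b _ h
    have := congrArg (fun t => (3 : Fin 4) - t) h
    simpa [sub_sub_cancel] using this
  · intro b hb
    refine ⟨3 - b, ?_, by simp [sub_sub_cancel]⟩
    simp only [Finset.mem_filter, Finset.mem_univ, true_and, sub_sub_cancel] at *
    exact hb

set_option maxRecDepth 1000000 in
set_option maxHeartbeats 16000000 in
lemma key : ∀ (i : Fin 2) (l : Fin 4) (b1 b2 b3 b4 b5 b6 b7 b8 b9 : Bool),
    ∃ x ∈ cands,
      col false b1 b2 b3 b4 b5 b6 b7 b8 b9 (x 0) (x 1) = col false b1 b2 b3 b4 b5 b6 b7 b8 b9 (x 1) (x 2) ∧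
      col false b1 b2 b3 b4 b5 b6 b7 b8 b9 (x 1) (x 2) = col false b1 b2 b3 b4 b5 b6 b7 b8 b9 (x 2) (x 3) ∧
      (Finset.univ.filter fun j => x j < x ⟨i.1, by omega⟩).card = l.val := by decide

set_option maxRecDepth 10000 in
set_option maxHeartbeats 2000000 in
lemma partA_low (i : Fin 2) (l : Fin 4) (c : Fin 5 → Fin 5 → Bool)
    (hsym : ∀ a b, c a b = c b a) :
    ∃ x : Fin 4 → Fin 5, Function.Injective x ∧
      c (x 0) (x 1) = c (x 1) (x 2) ∧ c (x 1) (x 2) = c (x 2) (x 3) ∧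
      (Finset.univ.filter fun j => x j < x ⟨i.1, by omega⟩).card = l.val := by
  cases hb : c 0 1 with
  | false =>
    obtain ⟨x, hx, h1, h2, h3⟩ :=
      key i l (c 0 2) (c 0 3) (c 0 4) (c 1 2) (c 1 3) (c 1 4) (c 2 3) (c 2 4) (c 3 4)
    have hinj := candsInj x hx
    have hcol : ∀ a b : Fin 5, a ≠ b →
        col false (c 0 2) (c 0 3) (c 0 4) (c 1 2) (c 1 3) (c 1 4) (c 2 3) (c 2 4) (c 3 4) a b
          = c a b := by
      intro a b hab
      rw [← hb, colEq c hsym a b hab]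
    rw [hcol _ _ (hinj.ne (by decide)), hcol _ _ (hinj.ne (by decide))] at h1
    rw [hcol _ _ (hinj.ne (by decide)), hcol _ _ (hinj.ne (by decide))] at h2
    exact ⟨x, hinj, h1, h2, h3⟩
  | true =>
    obtain ⟨x, hx, h1, h2, h3⟩ :=
      key i l (!c 0 2) (!c 0 3) (!c 0 4) (!c 1 2) (!c 1 3) (!c 1 4) (!c 2 3) (!c 2 4) (!c 3 4)
    have hinj := candsInj x hx
    have hcol : ∀ a b : Fin 5, a ≠ b →
        col false (!c 0 2) (!c 0 3) (!c 0 4) (!c 1 2) (!c 1 3) (!c 1 4) (!c 2 3) (!c 2 4)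
          (!c 3 4) a b = !(c a b) := by
      intro a b hab
      have hf : (false : Bool) = !(c 0 1) := by rw [hb]; rfl
      rw [hf, colFlip, colEq c hsym a b hab]
    rw [hcol _ _ (hinj.ne (by decide)), hcol _ _ (hinj.ne (by decide))] at h1
    rw [hcol _ _ (hinj.ne (by decide)), hcol _ _ (hinj.ne (by decide))] at h2
    exact ⟨x, hinj, Bool.not_inj h1, Bool.not_inj h2, h3⟩

set_option maxRecDepth 10000 in
set_option maxHeartbeats 2000000 in
lemma partA (i l : Fin 4) (c : Fin 5 → Fin 5 → Bool)
    (hsym : ∀ a b, c a b = c b a) :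
    ∃ x : Fin 4 → Fin 5, Function.Injective x ∧
      c (x 0) (x 1) = c (x 1) (x 2) ∧ c (x 1) (x 2) = c (x 2) (x 3) ∧
      (Finset.univ.filter fun j => x j < x i).card = l.val := by
  have rev : ∀ (i' : Fin 2),
      (∃ x : Fin 4 → Fin 5, Function.Injective x ∧
        c (x 0) (x 1) = c (x 1) (x 2) ∧ c (x 1) (x 2) = c (x 2) (x 3) ∧
        (Finset.univ.filter fun j => x j < x ⟨3 - i'.1, by omega⟩).card = l.val) := by
    intro i'
    obtain ⟨x, hinj, h1, h2, h3⟩ := partA_low i' l c hsym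
    refine ⟨fun j => x (3 - j), ?_, ?_, ?_, ?_⟩
    · intro a b h
      have := hinj h
      have := congrArg (fun t => (3 : Fin 4) - t) this
      simpa [sub_sub_cancel] using this
    · show c (x 3) (x 2) = c (x 2) (x 1)
      calc c (x 3) (x 2) = c (x 2) (x 3) := hsym _ _
        _ = c (x 1) (x 2) := h2.symm
        _ = c (x 2) (x 1) := hsym _ _
    · show c (x 2) (x 1) = c (x 1) (x 0)
      calc c (x 2) (x 1) = c (x 1) (x 2) := hsym _ _
        _ = c (x 0) (x 1) := h1.symm
        _ = c (x 1) (x 0) := hsym _ _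
    · have hv : ((3 : Fin 4) - (⟨3 - i'.1, by omega⟩ : Fin 4)) = (⟨i'.1, by omega⟩ : Fin 4) := by
        have h2' := i'.isLt
        apply Fin.ext
        rw [Fin.sub_def]
        simp only []
        omega
      calc (Finset.univ.filter fun j => x (3 - j) < x (3 - (⟨3 - i'.1, by omega⟩ : Fin 4))).card
          = (Finset.univ.filter fun j => x (3 - j) < x ⟨i'.1, by omega⟩).card := by rw [hv]
        _ = (Finset.univ.filter fun j => x j < x ⟨i'.1, by omega⟩).card :=
            card_comp_rev x _
        _ = l.val := h3
  fin_cases i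
  · exact partA_low 0 l c hsym
  · exact partA_low 1 l c hsym
  · exact rev 1
  · exact rev 0

set_option maxRecDepth 100000 in
set_option maxHeartbeats 4000000 in
lemma noMono : ∀ x : Fin 4 → Fin 4, Function.Injective x →
    ¬((decide ((x 0).1 < 3 ∧ (x 1).1 < 3) = decide ((x 1).1 < 3 ∧ (x 2).1 < 3)) ∧
      (decide ((x 1).1 < 3 ∧ (x 2).1 < 3) = decide ((x 2).1 < 3 ∧ (x 3).1 < 3))) := by
  decide

lemma partB (k : Fin 4) (m : ℕ) :
    ∃ c : Fin 4 → Fin 4 → Bool, (∀ a b, c a b = c b a) ∧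
      ¬ ∃ x : Fin 4 → Fin 4, Function.Injective x ∧
        c (x 0) (x 1) = c (x 1) (x 2) ∧ c (x 1) (x 2) = c (x 2) (x 3) ∧
        (Finset.univ.filter fun j => x j < x k).card = m := by
  refine ⟨fun a b => decide (a.1 < 3 ∧ b.1 < 3),
    fun a b => decide_eq_decide.mpr and_comm, ?_⟩
  rintro ⟨x, hx, h1, h2, -⟩
  exact noMono x hx ⟨h1, h2⟩

/-- For every vertex `p_i` (`i ∈ {1,2,3,4}`) of the path `P₄` and every order-label
`l ∈ {1,2,3,4}`, the ordered Ramsey number of the `(p_i, l)`-ordering of `P₄` equals `5`: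
(a) every ordered 2-coloring on `5` vertices contains a monochromatic path
`x 0 — x 1 — x 2 — x 3` on distinct vertices in which the `(i-1)`-indexed vertex is the
`l`-th smallest (exactly `l - 1` of the chosen vertices are smaller than it), and
(b) some ordered 2-coloring on `4` vertices contains no such configuration. -/
theorem ordered_ramsey_P4_one_ordering_eq_five
    (i l : ℕ) (hi : 1 ≤ i) (hi' : i ≤ 4) (hl : 1 ≤ l) (hl' : l ≤ 4) :
    (∀ c : Fin 5 → Fin 5 → Bool, (∀ a b, c a b = c b a) →
      ∃ x : Fin 4 → Fin 5, Function.Injective x ∧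
        c (x 0) (x 1) = c (x 1) (x 2) ∧ c (x 1) (x 2) = c (x 2) (x 3) ∧
        (Finset.univ.filter fun j => x j < x ⟨i - 1, by omega⟩).card = l - 1) ∧
    (∃ c : Fin 4 → Fin 4 → Bool, (∀ a b, c a b = c b a) ∧
      ¬ ∃ x : Fin 4 → Fin 4, Function.Injective x ∧
        c (x 0) (x 1) = c (x 1) (x 2) ∧ c (x 1) (x 2) = c (x 2) (x 3) ∧
        (Finset.univ.filter fun j => x j < x ⟨i - 1, by omega⟩).card = l - 1) :=
  ⟨fun c hsym => partA ⟨i - 1, by omega⟩ ⟨l - 1, by omega⟩ c hsym,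
   partB ⟨i - 1, by omega⟩ (l - 1)⟩
end

section
/- The ordered Ramsey number of the (s_1,2)-ordering of the 4-star equals 6: every ordered 2-coloring on 6 vertices contains distinct vertices x1,x2,x3,x4 such that the edges {x1,x2},{x2,x3},{x2,x4} all have the same color and x1 is the 2nd smallest of x1,x2,x3,x4; and there exists an ordered 2-coloring on 5 vertices containing no such configuration. -/
lemma three_equal : ∀ b : Fin 5 → Bool, ∃ i j k : Fin 5,
    i < j ∧ j < k ∧ b i = b j ∧ b j = b k := by decide

def cEx : Fin 5 → Fin 5 → Bool :=
  ![![false,false,false,true,true],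
    ![false,false,true,false,false],
    ![false,true,false,false,false],
    ![true,false,false,false,true],
    ![true,false,false,true,false]]

/-- The ordered Ramsey number of the (s₁,2)-ordering of the 4-star equals 6: every ordered 2-coloring on 6 vertices contains distinct vertices x1,x2,x3,x4 (playing s1,s2,s3,s4 of the 4-star, edges {s1,s2},{s2,s3},{s2,s4}) whose three edges all have the same color and such that x1 is the 2nd smallest of the four (exactly one other chosen vertex is smaller); and some ordered 2-coloring on 5 vertices contains no such configuration. -/
theorem ordered_ramsey_star_s1_2_eq_six :
    (∀ c : Fin 6 → Fin 6 → Bool, (∀ a b, c a b = c b a) →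
      ∃ x1 x2 x3 x4 : Fin 6,
        x1 ≠ x2 ∧ x1 ≠ x3 ∧ x1 ≠ x4 ∧ x2 ≠ x3 ∧ x2 ≠ x4 ∧ x3 ≠ x4 ∧
        c x1 x2 = c x2 x3 ∧ c x2 x3 = c x2 x4 ∧
        ((if x2 < x1 then 1 else 0) + (if x3 < x1 then 1 else 0) + (if x4 < x1 then 1 else 0) : ℕ) = 1) ∧
    (∃ c : Fin 5 → Fin 5 → Bool, (∀ a b, c a b = c b a) ∧
      ¬ ∃ x1 x2 x3 x4 : Fin 5,
        x1 ≠ x2 ∧ x1 ≠ x3 ∧ x1 ≠ x4 ∧ x2 ≠ x3 ∧ x2 ≠ x4 ∧ x3 ≠ x4 ∧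
        c x1 x2 = c x2 x3 ∧ c x2 x3 = c x2 x4 ∧
        ((if x2 < x1 then 1 else 0) + (if x3 < x1 then 1 else 0) + (if x4 < x1 then 1 else 0) : ℕ) = 1) := by
  constructor
  · intro c hsym
    obtain ⟨i, j, k, hij, hjk, e1, e2⟩ := three_equal (fun i => c 0 i.succ)
    refine ⟨i.succ, 0, j.succ, k.succ, ?_, ?_, ?_, ?_, ?_, ?_, ?_, ?_, ?_⟩
    · exact (Fin.succ_ne_zero i)
    · simp [Fin.succ_inj, hij.ne]
    · simp [Fin.succ_inj, (hij.trans hjk).ne]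
    · exact (Fin.succ_ne_zero j).symm
    · exact (Fin.succ_ne_zero k).symm
    · simp [Fin.succ_inj, hjk.ne]
    · rw [hsym]; exact e1
    · exact e2
    · have h1 : (0 : Fin 6) < i.succ := Fin.succ_pos i
      have h2 : ¬ (j.succ < i.succ) := not_lt.2 (Fin.succ_le_succ_iff.2 hij.le)
      have h3 : ¬ (k.succ < i.succ) := not_lt.2 (Fin.succ_le_succ_iff.2 (hij.trans hjk).le)
      simp [h1, h2, h3]
  · exact ⟨cEx, by decide, by decide⟩
end

section
/- The ordered Ramsey number of the (s_1,1)-ordering of the 4-star equals 6: every ordered 2-coloring on 6 vertices contains distinct vertices x1,x2,x3,x4 such that the edges {x1,x2},{x2,x3},{x2,x4} all have the same color and x1 is the smallest of x1,x2,x3,x4; and there exists an ordered 2-coloring on 5 vertices containing no such configuration. -/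
private lemma bool_ne_not {x y : Bool} (h : ¬ x = !y) : x = y := by
  revert h; cases x <;> cases y <;> decide

/-- Core step: if `a`'s edge to 1 has color `!(c 0 1)` and suitable order facts hold,
we derive a contradiction from the avoidance hypothesis. -/
private lemma core (c : Fin 6 → Fin 6 → Bool) (hs : ∀ a b, c a b = c b a)
    (H : ∀ x1 x2 x3 x4 : Fin 6, x1 < x2 → x1 < x3 → x1 < x4 →
      x2 ≠ x3 → x2 ≠ x4 → x3 ≠ x4 → c x1 x2 = c x2 x3 → c x2 x3 = c x2 x4 → False)
    (a w1 w2 w3 : Fin 6)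
    (h1a : (1 : Fin 6) < a) (h1w1 : (1 : Fin 6) < w1) (h1w2 : (1 : Fin 6) < w2)
    (h1w3 : (1 : Fin 6) < w3)
    (haw1 : a ≠ w1) (haw2 : a ≠ w2) (haw3 : a ≠ w3)
    (hw12 : w1 < w2) (hw13 : w1 < w3) (hw23 : w2 ≠ w3) (hw1a : w1 < a)
    (hγ : c 1 a = !(c 0 1)) : False := by
  set γ := c 0 1 with hγdef
  have h01 : (0 : Fin 6) < 1 := by decide
  have h0a : (0 : Fin 6) < a := lt_trans h01 h1a
  have h0w1 : (0 : Fin 6) < w1 := lt_trans h01 h1w1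
  have h0w2 : (0 : Fin 6) < w2 := lt_trans h01 h1w2
  have h0w3 : (0 : Fin 6) < w3 := lt_trans h01 h1w3
  have ha1 : a ≠ 1 := (ne_of_lt h1a).symm
  have h1w1' : (1 : Fin 6) ≠ w1 := ne_of_lt h1w1
  have h1w2' : (1 : Fin 6) ≠ w2 := ne_of_lt h1w2
  have h1w3' : (1 : Fin 6) ≠ w3 := ne_of_lt h1w3
  -- Step 2: at least two of the edges from `a` into {w1,w2,w3} have color γ.
  have pair : ∀ wi wj : Fin 6, (1:Fin 6) < wi → (1:Fin 6) < wj → a ≠ wi → a ≠ wj →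
      wi ≠ wj → c a wi = !γ → c a wj = !γ → False := by
    intro wi wj hi hj hai haj hij hci hcj
    exact H 1 a wi wj h1a hi hj hai haj hij (hγ.trans hci.symm) (hci.trans hcj.symm)
  have h2 : (c a w1 = γ ∧ c a w2 = γ) ∨ (c a w1 = γ ∧ c a w3 = γ) ∨
      (c a w2 = γ ∧ c a w3 = γ) := by
    by_cases e1 : c a w1 = γ
    · by_cases e2 : c a w2 = γ
      · exact Or.inl ⟨e1, e2⟩
      · by_cases e3 : c a w3 = γ
        · exact Or.inr (Or.inl ⟨e1, e3⟩)
        · exact absurd (bool_ne_not (y := !γ) (by simp [e3]))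
            (fun h => (pair w2 w3 h1w2 h1w3 haw2 haw3 hw23
              (bool_ne_not (y := !γ) (by simp [e2])) h))
    · by_cases e2 : c a w2 = γ
      · by_cases e3 : c a w3 = γ
        · exact Or.inr (Or.inr ⟨e2, e3⟩)
        · exact absurd (bool_ne_not (y := !γ) (by simp [e3]))
            (fun h => (pair w1 w3 h1w1 h1w3 haw1 haw3 (ne_of_lt hw13)
              (bool_ne_not (y := !γ) (by simp [e1])) h))
      · exact absurd (bool_ne_not (y := !γ) (by simp [e2]))
          (fun h => (pair w1 w2 h1w1 h1w2 haw1 haw2 (ne_of_lt hw12)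
            (bool_ne_not (y := !γ) (by simp [e1])) h))
  -- Step 3: c 0 a = !γ.
  have h0aγ : c 0 a = !γ := by
    have two : ∀ wi wj : Fin 6, (0:Fin 6) < wi → (0:Fin 6) < wj → a ≠ wi → a ≠ wj →
        wi ≠ wj → c a wi = γ → c a wj = γ → c 0 a = !γ := by
      intro wi wj hi hj hai haj hij hci hcj
      apply bool_ne_not
      intro hc
      rw [Bool.not_not] at hc
      exact H 0 a wi wj h0a hi hj hai haj hij (hc.trans hci.symm) (hci.trans hcj.symm)
    rcases h2 with ⟨e1, e2⟩ | ⟨e1, e2⟩ | ⟨e1, e2⟩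
    · exact two w1 w2 h0w1 h0w2 haw1 haw2 (ne_of_lt hw12) e1 e2
    · exact two w1 w3 h0w1 h0w3 haw1 haw3 (ne_of_lt hw13) e1 e2
    · exact two w2 w3 h0w2 h0w3 haw2 haw3 hw23 e1 e2
  -- Step 4: all edges from a into {w1,w2,w3} have color γ.
  have h4 : ∀ w : Fin 6, (0:Fin 6) < w → a ≠ w → (1:Fin 6) ≠ w → c a w = γ := by
    intro w h0w haw h1w
    apply bool_ne_not
    intro hc
    exact H 0 a 1 w h0a h01 h0w ha1 haw h1w
      (h0aγ.trans (((hs a 1).trans hγ).symm)) (((hs a 1).trans hγ).trans hc.symm)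
  -- Final contradiction: (w1, a, w2, w3) is monochromatic of color γ.
  have e1 : c a w1 = γ := h4 w1 h0w1 haw1 h1w1'
  have e2 : c a w2 = γ := h4 w2 h0w2 haw2 h1w2'
  have e3 : c a w3 = γ := h4 w3 h0w3 haw3 h1w3'
  exact H w1 a w2 w3 hw1a hw12 hw13 haw2 haw3 hw23
    (((hs w1 a).trans e1).trans e2.symm) (e2.trans e3.symm)

/-- The ordered Ramsey number of the (s₁,1)-ordering of the 4-star equals 6: every ordered 2-coloring on 6 vertices contains distinct vertices x1,x2,x3,x4 (playing s1,s2,s3,s4 of the 4-star, edges {s1,s2},{s2,s3},{s2,s4}) whose three edges all have the same color and such that x1 is the smallest of the four; and some ordered 2-coloring on 5 vertices contains no such configuration. -/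
theorem ordered_ramsey_star_s1_1_eq_six :
    (∀ c : Fin 6 → Fin 6 → Bool, (∀ a b, c a b = c b a) →
      ∃ x1 x2 x3 x4 : Fin 6,
        x1 ≠ x2 ∧ x1 ≠ x3 ∧ x1 ≠ x4 ∧ x2 ≠ x3 ∧ x2 ≠ x4 ∧ x3 ≠ x4 ∧
        c x1 x2 = c x2 x3 ∧ c x2 x3 = c x2 x4 ∧
        ((if x2 < x1 then 1 else 0) + (if x3 < x1 then 1 else 0) + (if x4 < x1 then 1 else 0) : ℕ) = 0) ∧
    (∃ c : Fin 5 → Fin 5 → Bool, (∀ a b, c a b = c b a) ∧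
      ¬ ∃ x1 x2 x3 x4 : Fin 5,
        x1 ≠ x2 ∧ x1 ≠ x3 ∧ x1 ≠ x4 ∧ x2 ≠ x3 ∧ x2 ≠ x4 ∧ x3 ≠ x4 ∧
        c x1 x2 = c x2 x3 ∧ c x2 x3 = c x2 x4 ∧
        ((if x2 < x1 then 1 else 0) + (if x3 < x1 then 1 else 0) + (if x4 < x1 then 1 else 0) : ℕ) = 0) := by
  constructor
  · intro c hs
    by_contra hcon
    push_neg at hcon
    have H : ∀ x1 x2 x3 x4 : Fin 6, x1 < x2 → x1 < x3 → x1 < x4 →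
        x2 ≠ x3 → x2 ≠ x4 → x3 ≠ x4 → c x1 x2 = c x2 x3 → c x2 x3 = c x2 x4 → False := by
      intro x1 x2 x3 x4 h12 h13 h14 h23 h24 h34 e1 e2
      have := hcon x1 x2 x3 x4 (ne_of_lt h12) (ne_of_lt h13) (ne_of_lt h14) h23 h24 h34 e1 e2
      apply this
      rw [if_neg (not_lt.mpr h12.le), if_neg (not_lt.mpr h13.le), if_neg (not_lt.mpr h14.le)]
    -- One of c 1 3, c 1 4 equals !(c 0 1), otherwise (0,1,3,4) is monochromatic.
    have hA : c 1 3 = !(c 0 1) ∨ c 1 4 = !(c 0 1) := by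
      by_contra hB
      push_neg at hB
      have e3 : c 1 3 = c 0 1 := bool_ne_not hB.1
      have e4 : c 1 4 = c 0 1 := bool_ne_not hB.2
      exact H 0 1 3 4 (by decide) (by decide) (by decide) (by decide) (by decide) (by decide)
        e3.symm (e3.trans e4.symm)
    rcases hA with hA | hA
    · exact core c hs H 3 2 4 5 (by decide) (by decide) (by decide) (by decide)
        (by decide) (by decide) (by decide) (by decide) (by decide) (by decide) (by decide) hA
    · exact core c hs H 4 2 3 5 (by decide) (by decide) (by decide) (by decide)
        (by decide) (by decide) (by decide) (by decide) (by decide) (by decide) (by decide) hA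
  · refine ⟨fun a b => decide ((a = 1 ∨ b = 1) ∧ (a = 3 ∨ a = 4) ∨ (b = 1 ∨ a = 1) ∧ (b = 3 ∨ b = 4) ∨
      (a = 2 ∨ b = 2) ∧ (b = 3 ∨ b = 4) ∨ (b = 2 ∨ a = 2) ∧ (a = 3 ∨ a = 4)), ?_, ?_⟩ <;> decide
end

section
/- The ordered Ramsey number of the (e_3,2)-ordering of the 3-pan is at most 9: every ordered 2-coloring on 9 vertices contains distinct vertices x1,x2,x3,x4 such that the edges {x1,x2},{x2,x3},{x2,x4},{x3,x4} all have the same color and x3 is the 2nd smallest of x1,x2,x3,x4. -/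
private lemma bool_eq_of_ne_of_ne : ∀ {x y k : Bool}, x ≠ k → y ≠ k → x = y := by decide

private lemma pan_build (c : Fin 9 → Fin 9 → Bool)
    (x1 x2 x3 x4 : Fin 9)
    (h12 : x1.val ≠ x2.val) (h14 : x1.val ≠ x4.val) (h24 : x2.val ≠ x4.val)
    (hsmall : (x1.val < x3.val ∧ x3.val < x2.val ∧ x3.val < x4.val) ∨
      (x2.val < x3.val ∧ x3.val < x1.val ∧ x3.val < x4.val) ∨
      (x4.val < x3.val ∧ x3.val < x1.val ∧ x3.val < x2.val))
    (e1 : c x1 x2 = c x2 x3) (e2 : c x2 x3 = c x2 x4) (e3 : c x2 x4 = c x3 x4) :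
    ∃ y1 y2 y3 y4 : Fin 9,
      y1 ≠ y2 ∧ y1 ≠ y3 ∧ y1 ≠ y4 ∧ y2 ≠ y3 ∧ y2 ≠ y4 ∧ y3 ≠ y4 ∧
      c y1 y2 = c y2 y3 ∧ c y2 y3 = c y2 y4 ∧ c y2 y4 = c y3 y4 ∧
      ((if y1 < y3 then 1 else 0) + (if y2 < y3 then 1 else 0) + (if y4 < y3 then 1 else 0) : ℕ) = 1 := by
  refine ⟨x1, x2, x3, x4, ?_, ?_, ?_, ?_, ?_, ?_, e1, e2, e3, ?_⟩
  · omega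
  · rcases hsmall with ⟨h1,h2,h3⟩|⟨h1,h2,h3⟩|⟨h1,h2,h3⟩ <;> omega
  · omega
  · rcases hsmall with ⟨h1,h2,h3⟩|⟨h1,h2,h3⟩|⟨h1,h2,h3⟩ <;> omega
  · omega
  · rcases hsmall with ⟨h1,h2,h3⟩|⟨h1,h2,h3⟩|⟨h1,h2,h3⟩ <;> omega
  · rcases hsmall with ⟨h1,h2,h3⟩|⟨h1,h2,h3⟩|⟨h1,h2,h3⟩ <;> split_ifs <;> omega

private lemma tri_of_star (c : Fin 9 → Fin 9 → Bool) {k : Bool}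
    (v n1 n2 n3 : Fin 9) (h01 : v < n1) (h12 : n1 < n2) (h23 : n2 < n3)
    (e1 : c v n1 = k) (e2 : c v n2 = k) (e3 : c v n3 = k) :
    ∃ a b d : Fin 9, v ≤ a ∧ a < b ∧ b < d ∧ c a b = c a d ∧ c a d = c b d := by
  by_cases p12 : c n1 n2 = k
  · exact ⟨v, n1, n2, le_refl v, h01, h12, e1.trans e2.symm, e2.trans p12.symm⟩
  · by_cases p13 : c n1 n3 = k
    · exact ⟨v, n1, n3, le_refl v, h01, h12.trans h23, e1.trans e3.symm, e3.trans p13.symm⟩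
    · by_cases p23 : c n2 n3 = k
      · exact ⟨v, n2, n3, le_refl v, h01.trans h12, h23, e2.trans e3.symm, e3.trans p23.symm⟩
      · exact ⟨n1, n2, n3, h01.le, h12, h23, bool_eq_of_ne_of_ne p12 p13,
          bool_eq_of_ne_of_ne p13 p23⟩

private lemma exists_tri (c : Fin 9 → Fin 9 → Bool) :
    ∃ a b d : Fin 9, (3:Fin 9) ≤ a ∧ a < b ∧ b < d ∧ c a b = c a d ∧ c a d = c b d := by
  cases h4 : c 3 4 <;> cases h5 : c 3 5 <;> cases h6 : c 3 6 <;> cases h7 : c 3 7 <;>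
  cases h8 : c 3 8 <;>
  first
  | exact tri_of_star c 3 4 5 6 (by decide) (by decide) (by decide) h4 h5 h6
  | exact tri_of_star c 3 4 5 7 (by decide) (by decide) (by decide) h4 h5 h7
  | exact tri_of_star c 3 4 5 8 (by decide) (by decide) (by decide) h4 h5 h8
  | exact tri_of_star c 3 4 6 7 (by decide) (by decide) (by decide) h4 h6 h7
  | exact tri_of_star c 3 4 6 8 (by decide) (by decide) (by decide) h4 h6 h8
  | exact tri_of_star c 3 4 7 8 (by decide) (by decide) (by decide) h4 h7 h8
  | exact tri_of_star c 3 5 6 7 (by decide) (by decide) (by decide) h5 h6 h7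
  | exact tri_of_star c 3 5 6 8 (by decide) (by decide) (by decide) h5 h6 h8
  | exact tri_of_star c 3 5 7 8 (by decide) (by decide) (by decide) h5 h7 h8
  | exact tri_of_star c 3 6 7 8 (by decide) (by decide) (by decide) h6 h7 h8

/-- The ordered Ramsey number of the (e₃,2)-ordering of the 3-pan is at most 9: every ordered 2-coloring on 9 vertices contains distinct vertices x1,x2,x3,x4 (playing e1,e2,e3,e4 of the 3-pan) whose four edges all have the same color and such that x3 is the 2nd smallest of the four (exactly one other chosen vertex is smaller). -/
theorem ordered_ramsey_pan_e3_2_le_nine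
    (c : Fin 9 → Fin 9 → Bool) (hc : ∀ a b, c a b = c b a) :
    ∃ x1 x2 x3 x4 : Fin 9,
      x1 ≠ x2 ∧ x1 ≠ x3 ∧ x1 ≠ x4 ∧ x2 ≠ x3 ∧ x2 ≠ x4 ∧ x3 ≠ x4 ∧
      c x1 x2 = c x2 x3 ∧ c x2 x3 = c x2 x4 ∧ c x2 x4 = c x3 x4 ∧
      ((if x1 < x3 then 1 else 0) + (if x2 < x3 then 1 else 0) + (if x4 < x3 then 1 else 0) : ℕ) = 1 := by
  obtain ⟨a, b, d, ha3, hab, hbd, e1, e2⟩ := exists_tri c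
  have ha3' : 3 ≤ a.val := by omega
  have hab' : a.val < b.val := hab
  have hbd' : b.val < d.val := hbd
  -- Step A: a pendant from {0,1,2} to b or d of the triangle's color
  by_cases hA : ∃ v : Fin 9, v.val ≤ 2 ∧ (c v b = c a b ∨ c v d = c a b)
  · obtain ⟨v, hv2, h | h⟩ := hA
    · refine pan_build c v b a d (by omega) (by omega) (by omega)
        (Or.inl ⟨by omega, by omega, by omega⟩) ?_ ?_ ?_
      · rw [h]; exact hc a b
      · rw [hc b a]; exact e1.trans e2
      · exact e2.symm
    · refine pan_build c v d a b (by omega) (by omega) (by omega)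
        (Or.inl ⟨by omega, by omega, by omega⟩) ?_ ?_ ?_
      · rw [h, hc d a]; exact e1
      · rw [hc d a, hc d b]; exact e2
      · rw [hc d b]; exact (e1.trans e2).symm
  · push_neg at hA
    -- Step B: an edge inside {0,1,2} of the opposite color
    by_cases hB : ∃ u v : Fin 9, u < v ∧ v.val ≤ 2 ∧ c u v ≠ c a b
    · obtain ⟨u, v, huv, hv2, h⟩ := hB
      have hu2 : u.val ≤ 2 := by have : u.val < v.val := huv; omega
      obtain ⟨hub, hud⟩ := hA u hu2
      obtain ⟨hvb, hvd⟩ := hA v hv2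
      refine pan_build c b u v d (by omega) (by omega) (by omega)
        (Or.inr (Or.inl ⟨by omega, by omega, by omega⟩)) ?_ ?_ ?_
      · rw [hc b u]; exact bool_eq_of_ne_of_ne hub h
      · exact bool_eq_of_ne_of_ne h hud
      · exact bool_eq_of_ne_of_ne hud hvd
    · push_neg at hB
      have h01 : c 0 1 = c a b := hB 0 1 (by decide) (by decide)
      have h02 : c 0 2 = c a b := hB 0 2 (by decide) (by decide)
      have h12 : c 1 2 = c a b := hB 1 2 (by decide) (by decide)
      -- Step C: a pendant from {3..8} to 0 or 2 of the triangle's color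
      by_cases hC : ∃ v : Fin 9, 3 ≤ v.val ∧ (c v 0 = c a b ∨ c v 2 = c a b)
      · obtain ⟨v, hv3, h | h⟩ := hC
        · refine pan_build c v 0 1 2 (by omega) (by omega) (by decide)
            (Or.inr (Or.inl ⟨by decide, by omega, by decide⟩)) ?_ ?_ ?_
          · rw [h, h01]
          · rw [h01, h02]
          · rw [h02, h12]
        · refine pan_build c v 2 1 0 (by omega) (by omega) (by decide)
            (Or.inr (Or.inr ⟨by decide, by omega, by decide⟩)) ?_ ?_ ?_
          · rw [h, hc 2 1, h12]
          · rw [hc 2 1, hc 2 0, h12, h02]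
          · rw [hc 2 0, hc 1 0, h02, h01]
      · push_neg at hC
        -- Step D: an edge u<v with 3 ≤ u ≤ 6 of the opposite color
        by_cases hD : ∃ u v : Fin 9, 3 ≤ u.val ∧ u.val ≤ 6 ∧ u < v ∧ c u v ≠ c a b
        · obtain ⟨u, v, hu3, hu6, huv, h⟩ := hD
          have huv' : u.val < v.val := huv
          obtain ⟨hu0, _⟩ := hC u hu3
          obtain ⟨hv0, _⟩ := hC v (by omega)
          by_cases hv8 : v.val = 8
          · obtain ⟨h70, _⟩ := hC 7 (by decide)
            refine pan_build c 7 0 u v (by decide) (by omega) (by omega)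
              (Or.inr (Or.inl ⟨by omega, by omega, by omega⟩)) ?_ ?_ ?_
            · rw [hc 0 u]; exact bool_eq_of_ne_of_ne h70 hu0
            · rw [hc 0 u, hc 0 v]; exact bool_eq_of_ne_of_ne hu0 hv0
            · rw [hc 0 v]; exact bool_eq_of_ne_of_ne hv0 h
          · obtain ⟨h80, _⟩ := hC 8 (by decide)
            refine pan_build c 8 0 u v (by decide) (by omega) (by omega)
              (Or.inr (Or.inl ⟨by omega, by omega, by omega⟩)) ?_ ?_ ?_
            · rw [hc 0 u]; exact bool_eq_of_ne_of_ne h80 hu0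
            · rw [hc 0 u, hc 0 v]; exact bool_eq_of_ne_of_ne hu0 hv0
            · rw [hc 0 v]; exact bool_eq_of_ne_of_ne hv0 h
        · push_neg at hD
          have h36 : c 3 6 = c a b := hD 3 6 (by decide) (by decide) (by decide)
          have h34 : c 3 4 = c a b := hD 3 4 (by decide) (by decide) (by decide)
          have h35 : c 3 5 = c a b := hD 3 5 (by decide) (by decide) (by decide)
          have h45 : c 4 5 = c a b := hD 4 5 (by decide) (by decide) (by decide)
          refine pan_build c 6 3 4 5 (by decide) (by decide) (by decide)
            (Or.inr (Or.inl ⟨by decide, by decide, by decide⟩)) ?_ ?_ ?_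
          · rw [hc 6 3, h36, h34]
          · rw [h34, h35]
          · rw [h35, h45]
end

section
/- The ordered Ramsey number of the (d_1,2)-ordering of the diamond graph is at most 16: every ordered 2-coloring on 16 vertices contains distinct vertices x1,x2,x3,x4 such that the edges {x1,x2},{x1,x3},{x2,x3},{x2,x4},{x3,x4} all have the same color and x1 is the 2nd smallest of x1,x2,x3,x4. -/
private lemma four_sorted16 (s : Finset (Fin 16)) (h : 4 ≤ s.card) :
    ∃ a b c d : Fin 16, a ∈ s ∧ b ∈ s ∧ c ∈ s ∧ d ∈ s ∧ a < b ∧ b < c ∧ c < d := by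
  have h0 : s.Nonempty := Finset.card_pos.mp (by omega)
  set a := s.min' h0 with ha_def
  have ha : a ∈ s := s.min'_mem h0
  set s1 := s.erase a with hs1
  have hs1c : 3 ≤ s1.card := by
    rw [hs1, Finset.card_erase_of_mem ha]; omega
  have h1 : s1.Nonempty := Finset.card_pos.mp (by omega)
  set b := s1.min' h1 with hb_def
  have hb1 : b ∈ s1 := s1.min'_mem h1
  have hab : a < b := Finset.min'_lt_of_mem_erase_min' s h0 hb1
  set s2 := s1.erase b with hs2
  have hs2c : 2 ≤ s2.card := by
    rw [hs2, Finset.card_erase_of_mem hb1]; omega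
  have h2 : s2.Nonempty := Finset.card_pos.mp (by omega)
  set cc := s2.min' h2 with hc_def
  have hc2 : cc ∈ s2 := s2.min'_mem h2
  have hbc : b < cc := Finset.min'_lt_of_mem_erase_min' s1 h1 hc2
  set s3 := s2.erase cc with hs3
  have hs3c : 1 ≤ s3.card := by
    rw [hs3, Finset.card_erase_of_mem hc2]; omega
  have h3 : s3.Nonempty := Finset.card_pos.mp (by omega)
  set d := s3.min' h3 with hd_def
  have hd3 : d ∈ s3 := s3.min'_mem h3
  have hcd : cc < d := Finset.min'_lt_of_mem_erase_min' s2 h2 hd3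
  refine ⟨a, b, cc, d, ha, Finset.erase_subset _ _ hb1, ?_, ?_, hab, hbc, hcd⟩
  · exact Finset.erase_subset _ _ (Finset.erase_subset _ _ hc2)
  · exact Finset.erase_subset _ _ (Finset.erase_subset _ _ (Finset.erase_subset _ _ hd3))

private lemma pat3 (c : Fin 16 → Fin 16 → Bool) (hc : ∀ a b, c a b = c b a) (X : Bool)
    (w1 w2 w3 w4 : Fin 16) (h12 : w1 < w2) (h23 : w2 < w3) (h34 : w3 < w4)
    (e12 : c w1 w2 = X) (e13 : c w1 w3 = X) (e23 : c w2 w3 = X)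
    (e14 : c w1 w4 = X) (e34 : c w3 w4 = X) :
    ∃ x1 x2 x3 x4 : Fin 16,
      x1 ≠ x2 ∧ x1 ≠ x3 ∧ x1 ≠ x4 ∧ x2 ≠ x3 ∧ x2 ≠ x4 ∧ x3 ≠ x4 ∧
      c x1 x2 = c x1 x3 ∧ c x1 x3 = c x2 x3 ∧ c x2 x3 = c x2 x4 ∧ c x2 x4 = c x3 x4 ∧
      ((if x2 < x1 then 1 else 0) + (if x3 < x1 then 1 else 0) + (if x4 < x1 then 1 else 0) : ℕ) = 1 := by
  refine ⟨w2, w1, w3, w4, ne_of_gt h12, ne_of_lt h23, ne_of_lt (h23.trans h34),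
    ne_of_lt (h12.trans h23), ne_of_lt ((h12.trans h23).trans h34), ne_of_lt h34,
    ?_, ?_, ?_, ?_, ?_⟩
  · rw [hc w2 w1, e12, e23]
  · rw [e23, e13]
  · rw [e13, e14]
  · rw [e14, e34]
  · have n3 : ¬ w3 < w2 := not_lt.mpr h23.le
    have n4 : ¬ w4 < w2 := not_lt.mpr ((h23.trans h34)).le
    simp [h12, n3, n4]

private lemma pat2 (c : Fin 16 → Fin 16 → Bool) (hc : ∀ a b, c a b = c b a) (X : Bool)
    (w1 w2 w3 w4 : Fin 16) (h12 : w1 < w2) (h23 : w2 < w3) (h34 : w3 < w4)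
    (e12 : c w1 w2 = X) (e13 : c w1 w3 = X) (e14 : c w1 w4 = X)
    (e24 : c w2 w4 = X) (e34 : c w3 w4 = X) :
    ∃ x1 x2 x3 x4 : Fin 16,
      x1 ≠ x2 ∧ x1 ≠ x3 ∧ x1 ≠ x4 ∧ x2 ≠ x3 ∧ x2 ≠ x4 ∧ x3 ≠ x4 ∧
      c x1 x2 = c x1 x3 ∧ c x1 x3 = c x2 x3 ∧ c x2 x3 = c x2 x4 ∧ c x2 x4 = c x3 x4 ∧
      ((if x2 < x1 then 1 else 0) + (if x3 < x1 then 1 else 0) + (if x4 < x1 then 1 else 0) : ℕ) = 1 := by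
  refine ⟨w2, w1, w4, w3, ne_of_gt h12, ne_of_lt (h23.trans h34), ne_of_lt h23,
    ne_of_lt ((h12.trans h23).trans h34), ne_of_lt (h12.trans h23), ne_of_gt h34,
    ?_, ?_, ?_, ?_, ?_⟩
  · rw [hc w2 w1, e12, e24]
  · rw [e24, e14]
  · rw [e14, e13]
  · rw [e13, hc w4 w3, e34]
  · have n3 : ¬ w4 < w2 := not_lt.mpr (h23.trans h34).le
    have n4 : ¬ w3 < w2 := not_lt.mpr h23.le
    simp [h12, n3, n4]

/-- The ordered Ramsey number of the (d₁,2)-ordering of the diamond graph is at most 16: every ordered 2-coloring on 16 vertices contains distinct vertices x1,x2,x3,x4 (playing d1,d2,d3,d4) whose five edges all have the same color and such that x1 is the 2nd smallest of the four (exactly one other chosen vertex is smaller). -/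
theorem ordered_ramsey_diamond_d1_2_le_sixteen
    (c : Fin 16 → Fin 16 → Bool) (hc : ∀ a b, c a b = c b a) :
    ∃ x1 x2 x3 x4 : Fin 16,
      x1 ≠ x2 ∧ x1 ≠ x3 ∧ x1 ≠ x4 ∧ x2 ≠ x3 ∧ x2 ≠ x4 ∧ x3 ≠ x4 ∧
      c x1 x2 = c x1 x3 ∧ c x1 x3 = c x2 x3 ∧ c x2 x3 = c x2 x4 ∧ c x2 x4 = c x3 x4 ∧
      ((if x2 < x1 then 1 else 0) + (if x3 < x1 then 1 else 0) + (if x4 < x1 then 1 else 0) : ℕ) = 1 := by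
  classical
  -- the 14 vertices above vertex 1
  have hIcard : (Finset.Ioi (1 : Fin 16)).card = 14 := by decide
  obtain ⟨X, hX⟩ : ∃ X : Bool, 7 ≤ ((Finset.Ioi (1 : Fin 16)).filter (fun v => c 1 v = X)).card := by
    by_contra h
    push_neg at h
    have h1 := h true
    have h2 := h false
    have key := Finset.card_filter_add_card_filter_not
      (s := Finset.Ioi (1 : Fin 16)) (p := fun v => c 1 v = true)
    simp only [Bool.not_eq_true] at key
    omega
  set S : Finset (Fin 16) := (Finset.Ioi (1 : Fin 16)).filter (fun v => c 1 v = X) with hSdef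
  have hSmem : ∀ v ∈ S, 1 < v ∧ c 1 v = X := by
    intro v hv
    rw [hSdef, Finset.mem_filter, Finset.mem_Ioi] at hv
    exact hv
  by_cases hch : ∃ q ∈ S, ∃ p ∈ S, ∃ r ∈ S, p < q ∧ r ≠ q ∧ r ≠ p ∧ c q p = X ∧ c q r = X
  · obtain ⟨q, hq, p, hp, r, hr, hpq, hrq, hrp, eqp, eqr⟩ := hch
    obtain ⟨hq1, hq2⟩ := hSmem q hq
    obtain ⟨hp1, hp2⟩ := hSmem p hp
    obtain ⟨hr1, hr2⟩ := hSmem r hr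
    rcases lt_or_gt_of_ne hrq with hlt | hgt
    · -- r < q ; cherry center q is the largest
      rcases lt_or_gt_of_ne hrp with hrp' | hrp'
      · -- r < p < q : use w = (1, r, p, q), pattern missing edge 23
        exact pat2 c hc X 1 r p q hr1 hrp' hpq hr2 hp2 hq2
          (by rw [hc r q]; exact eqr) (by rw [hc p q]; exact eqp)
      · -- p < r < q : use w = (1, p, r, q)
        exact pat2 c hc X 1 p r q hp1 hrp' hlt hp2 hr2 hq2
          (by rw [hc p q]; exact eqp) (by rw [hc r q]; exact eqr)
    · -- q < r : use w = (1, p, q, r), pattern iii (missing 24 = p-r)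
      exact pat3 c hc X 1 p q r hp1 hpq hgt hp2 hq2
        (by rw [hc p q]; exact eqp) hr2 eqr
  · -- no good cherry: the set L of vertices with no X-neighbour above is big and a !X-clique
    push_neg at hch
    set L : Finset (Fin 16) := S.filter (fun v => ∀ u ∈ S, u ≠ v → c v u = X → u < v) with hLdef
    have hLsub : L ⊆ S := Finset.filter_subset _ _
    have hLmem : ∀ v ∈ L, v ∈ S ∧ ∀ u ∈ S, u ≠ v → c v u = X → u < v := by
      intro v hv; rw [hLdef, Finset.mem_filter] at hv; exact hv
    have hC : ∀ v ∈ S \ L, ∃ u, u ∈ S ∧ u ≠ v ∧ c v u = X ∧ v < u := by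
      intro v hv
      rw [Finset.mem_sdiff] at hv
      obtain ⟨hvS, hvL⟩ := hv
      rw [hLdef, Finset.mem_filter] at hvL
      push_neg at hvL
      obtain ⟨u, huS, hune, hcol, hnlt⟩ := hvL hvS
      exact ⟨u, huS, hune, hcol, lt_of_le_of_ne hnlt (Ne.symm hune)⟩
    choose! f hf using hC
    have hmaps : ∀ v ∈ S \ L, f v ∈ L := by
      intro v hv
      obtain ⟨hfS, hfne, hfcol, hflt⟩ := hf v hv
      have hvS : v ∈ S := (Finset.mem_sdiff.mp hv).1
      rw [hLdef, Finset.mem_filter]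
      refine ⟨hfS, ?_⟩
      intro u huS hune hcol
      by_contra hnl
      have huf : f v < u := lt_of_le_of_ne (not_lt.mp hnl) (Ne.symm hune)
      exact hch (f v) hfS v hvS u huS hflt hune (ne_of_gt (hflt.trans huf))
        (by rw [hc (f v) v]; exact hfcol) hcol
    have hinj : Set.InjOn f ↑(S \ L) := by
      intro v1 hv1' v2 hv2' heq
      have hv1 : v1 ∈ S \ L := Finset.mem_coe.mp hv1'
      have hv2 : v2 ∈ S \ L := Finset.mem_coe.mp hv2'
      by_contra hne
      obtain ⟨hfS1, _, hfcol1, hflt1⟩ := hf v1 hv1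
      obtain ⟨hfS2, _, hfcol2, hflt2⟩ := hf v2 hv2
      have hv1S : v1 ∈ S := (Finset.mem_sdiff.mp hv1).1
      have hv2S : v2 ∈ S := (Finset.mem_sdiff.mp hv2).1
      refine hch (f v1) hfS1 v1 hv1S v2 hv2S hflt1 (by rw [← heq] at hflt2; exact ne_of_lt hflt2)
        (Ne.symm hne) (by rw [hc (f v1) v1]; exact hfcol1) ?_
      rw [heq, hc (f v2) v2]; exact hfcol2
    have hcard1 : (S \ L).card ≤ L.card :=
      Finset.card_le_card_of_injOn f hmaps hinj
    have hcard2 : (S \ L).card + L.card = S.card := Finset.card_sdiff_add_card_eq_card hLsub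
    have hL4 : 4 ≤ L.card := by omega
    obtain ⟨a, b, d, e, ha, hb, hd, he, hab, hbd, hde⟩ := four_sorted16 L hL4
    have hB : ∀ u ∈ L, ∀ v ∈ L, u < v → c u v = !X := by
      intro u hu v hv huv
      obtain ⟨huS, hucond⟩ := hLmem u hu
      have hvS : v ∈ L := hv
      by_contra hne
      have hx : c u v = X := by
        revert hne
        cases hcuv : c u v <;> cases X <;> simp
      exact absurd (hucond v (hLsub hv) (ne_of_gt huv) hx) (not_lt.mpr huv.le)
    exact pat3 c hc (!X) a b d e hab hbd hde (hB a ha b hb hab) (hB a ha d hd (hab.trans hbd))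
      (hB b hb d hd hbd) (hB a ha e he ((hab.trans hbd).trans hde)) (hB d hd e he hde)
end

section
/- The ordered Ramsey number of the (d_2,1)-ordering of the diamond graph is at most 13: every ordered 2-coloring on 13 vertices contains distinct vertices x1,x2,x3,x4 such that the edges {x1,x2},{x1,x3},{x2,x3},{x2,x4},{x3,x4} all have the same color and x2 is the smallest of x1,x2,x3,x4. -/
lemma diamond_key (c : Fin 13 → Fin 13 → Bool) (hc : ∀ a b, c a b = c b a)
    (k : Bool) (S : Finset (Fin 13)) (h0 : (0 : Fin 13) ∉ S)
    (hS : ∀ v ∈ S, c 0 v = k) (hcard : 6 ≤ S.card) :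
    ∃ x1 x2 x3 x4 : Fin 13,
      x1 ≠ x2 ∧ x1 ≠ x3 ∧ x1 ≠ x4 ∧ x2 ≠ x3 ∧ x2 ≠ x4 ∧ x3 ≠ x4 ∧
      c x1 x2 = c x1 x3 ∧ c x1 x3 = c x2 x3 ∧ c x2 x3 = c x2 x4 ∧ c x2 x4 = c x3 x4 ∧
      ((if x1 < x2 then 1 else 0) + (if x3 < x2 then 1 else 0) + (if x4 < x2 then 1 else 0) : ℕ) = 0 := by
  have hnotlt0 : ∀ y : Fin 13, ¬ y < 0 := by
    intro y h
    exact Nat.not_lt_zero _ h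
  by_cases hA : ∃ x3 ∈ S, ∃ x1 ∈ S, ∃ x4 ∈ S,
      x1 ≠ x3 ∧ x1 ≠ x4 ∧ x3 ≠ x4 ∧ c x3 x1 = k ∧ c x3 x4 = k
  · obtain ⟨x3, hx3, x1, hx1, x4, hx4, h13, h14, h34, e31, e34⟩ := hA
    refine ⟨x1, 0, x3, x4, ?_, h13, h14, ?_, ?_, h34, ?_, ?_, ?_, ?_, ?_⟩
    · intro h; exact h0 (h ▸ hx1)
    · intro h; exact h0 (h.symm ▸ hx3)
    · intro h; exact h0 (h.symm ▸ hx4)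
    · rw [hc x1 0, hS x1 hx1, hc x1 x3, e31]
    · rw [hc x1 x3, e31, hS x3 hx3]
    · rw [hS x3 hx3, hS x4 hx4]
    · rw [hS x4 hx4]; exact e34.symm
    · simp [hnotlt0]
  · push_neg at hA
    have hne : S.Nonempty := Finset.card_pos.mp (by omega)
    set x2 := S.min' hne with hx2def
    have hx2S : x2 ∈ S := S.min'_mem hne
    set T := S.erase x2 with hT
    have hTcard : T.card = S.card - 1 := Finset.card_erase_of_mem hx2S
    have hbad : (T.filter (fun v => c x2 v = k)).card ≤ 1 := by
      by_contra h
      push_neg at h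
      obtain ⟨a, ha, b, hb, hab⟩ := Finset.one_lt_card.mp h
      have ha' := Finset.mem_filter.mp ha
      have hb' := Finset.mem_filter.mp hb
      have haT := Finset.mem_erase.mp ha'.1
      have hbT := Finset.mem_erase.mp hb'.1
      exact hA x2 hx2S a haT.2 b hbT.2 haT.1 hab (Ne.symm hbT.1) ha'.2 hb'.2
    set G := T.filter (fun v => ¬ c x2 v = k) with hG
    have hsum := Finset.card_filter_add_card_filter_not (s := T)
      (p := fun v => c x2 v = k)
    have hGeq : G.card = (T.filter (fun a => ¬ c x2 a = k)).card := rfl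
    rw [← hGeq] at hsum
    have hGcard : 4 ≤ G.card := by omega
    have hGne : G.Nonempty := Finset.card_pos.mp (by omega)
    obtain ⟨x3, hx3G⟩ := hGne
    have hx3G' := Finset.mem_filter.mp hx3G
    have hx3T := Finset.mem_erase.mp hx3G'.1
    set U := G.erase x3 with hU
    have hUcard : U.card = G.card - 1 := Finset.card_erase_of_mem hx3G
    have hbad2 : (U.filter (fun v => c x3 v = k)).card ≤ 1 := by
      by_contra h
      push_neg at h
      obtain ⟨a, ha, b, hb, hab⟩ := Finset.one_lt_card.mp h
      have ha' := Finset.mem_filter.mp ha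
      have hb' := Finset.mem_filter.mp hb
      have haU := Finset.mem_erase.mp ha'.1
      have hbU := Finset.mem_erase.mp hb'.1
      have haS : a ∈ S := (Finset.mem_erase.mp (Finset.mem_filter.mp haU.2).1).2
      have hbS : b ∈ S := (Finset.mem_erase.mp (Finset.mem_filter.mp hbU.2).1).2
      exact hA x3 hx3T.2 a haS b hbS haU.1 hab (Ne.symm hbU.1) ha'.2 hb'.2
    set G2 := U.filter (fun v => ¬ c x3 v = k) with hG2
    have hsum2 := Finset.card_filter_add_card_filter_not (s := U)
      (p := fun v => c x3 v = k)
    have hG2eq : G2.card = (U.filter (fun a => ¬ c x3 a = k)).card := rfl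
    rw [← hG2eq] at hsum2
    have hG2card : 2 ≤ G2.card := by omega
    have h2 : 1 < G2.card := by omega
    obtain ⟨x1, hx1G2, x4, hx4G2, h14⟩ := Finset.one_lt_card.mp h2
    -- unpack memberships for x1
    have hx1' := Finset.mem_filter.mp hx1G2
    have hx1U := Finset.mem_erase.mp hx1'.1
    have hx1G := Finset.mem_filter.mp hx1U.2
    have hx1T := Finset.mem_erase.mp hx1G.1
    have hx4' := Finset.mem_filter.mp hx4G2
    have hx4U := Finset.mem_erase.mp hx4'.1
    have hx4G := Finset.mem_filter.mp hx4U.2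
    have hx4T := Finset.mem_erase.mp hx4G.1
    -- all five edges are ≠ k, hence pairwise equal
    have hpair : ∀ b b' : Bool, b ≠ k → b' ≠ k → b = b' := by
      intro b b' hb hb'; cases b <;> cases b' <;> cases k <;> simp_all
    have e12 : c x1 x2 ≠ k := by rw [hc x1 x2]; exact hx1G.2
    have e13 : c x1 x3 ≠ k := by rw [hc x1 x3]; exact hx1'.2
    have e23 : c x2 x3 ≠ k := hx3G'.2
    have e24 : c x2 x4 ≠ k := hx4G.2
    have e34 : c x3 x4 ≠ k := hx4'.2
    -- x2 is min of S, others in S \ {x2}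
    have hlt : ∀ y ∈ S, y ≠ x2 → x2 < y := fun y hy hne' =>
      lt_of_le_of_ne (S.min'_le y hy) (Ne.symm hne')
    have l1 : x2 < x1 := hlt x1 hx1T.2 hx1T.1
    have l3 : x2 < x3 := hlt x3 hx3T.2 hx3T.1
    have l4 : x2 < x4 := hlt x4 hx4T.2 hx4T.1
    refine ⟨x1, x2, x3, x4, hx1T.1, hx1U.1, h14,
      Ne.symm hx3T.1, Ne.symm hx4T.1,
      Ne.symm hx4U.1, hpair _ _ e12 e13, hpair _ _ e13 e23,
      hpair _ _ e23 e24, hpair _ _ e24 e34, ?_⟩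
    · simp [not_lt.mpr (le_of_lt l1), not_lt.mpr (le_of_lt l3), not_lt.mpr (le_of_lt l4)]

/-- The ordered Ramsey number of the (d₂,1)-ordering of the diamond graph is at most 13: every ordered 2-coloring on 13 vertices contains distinct vertices x1,x2,x3,x4 (playing d1,d2,d3,d4) whose five edges all have the same color and such that x2 is the smallest of the four. -/
theorem ordered_ramsey_diamond_d2_1_le_thirteen
    (c : Fin 13 → Fin 13 → Bool) (hc : ∀ a b, c a b = c b a) :
    ∃ x1 x2 x3 x4 : Fin 13,
      x1 ≠ x2 ∧ x1 ≠ x3 ∧ x1 ≠ x4 ∧ x2 ≠ x3 ∧ x2 ≠ x4 ∧ x3 ≠ x4 ∧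
      c x1 x2 = c x1 x3 ∧ c x1 x3 = c x2 x3 ∧ c x2 x3 = c x2 x4 ∧ c x2 x4 = c x3 x4 ∧
      ((if x1 < x2 then 1 else 0) + (if x3 < x2 then 1 else 0) + (if x4 < x2 then 1 else 0) : ℕ) = 0 := by
  set E : Finset (Fin 13) := Finset.univ.erase 0 with hE
  have hEcard : E.card = 12 := by
    rw [hE, Finset.card_erase_of_mem (Finset.mem_univ _), Finset.card_univ, Fintype.card_fin]
  have hsum := Finset.card_filter_add_card_filter_not (s := E)
    (p := fun v => c 0 v = true)
  have key : ∀ (k : Bool) (S : Finset (Fin 13)), (0 : Fin 13) ∉ S →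
      (∀ v ∈ S, c 0 v = k) → 6 ≤ S.card → _ := diamond_key c hc
  rcases le_or_gt 6 (E.filter (fun v => c 0 v = true)).card with h | h
  · exact diamond_key c hc true _ (fun hm => (Finset.mem_erase.mp (Finset.mem_filter.mp hm).1).1 rfl)
      (fun v hv => (Finset.mem_filter.mp hv).2) h
  · have h6 : 6 ≤ (E.filter (fun a => ¬ c 0 a = true)).card := by omega
    refine diamond_key c hc false _ (fun hm => (Finset.mem_erase.mp (Finset.mem_filter.mp hm).1).1 rfl)
      (fun v hv => ?_) h6
    have := (Finset.mem_filter.mp hv).2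
    simpa using this
end

section
/- The ordered Ramsey number of the (d_2,2)-ordering of the diamond graph is at most 17: every ordered 2-coloring on 17 vertices contains distinct vertices x1,x2,x3,x4 such that the edges {x1,x2},{x1,x3},{x2,x3},{x2,x4},{x3,x4} all have the same color and x2 is the 2nd smallest of x1,x2,x3,x4. -/
private lemma diamond_F4 (c : Fin 17 → Fin 17 → Bool) (hc : ∀ a b, c a b = c b a)
    (u w y z : Fin 17) (huw : u < w) (hwy : w < y) (hwz : w < z) (hyz : y ≠ z)
    (C : Bool) (h1 : c u w = C) (h2 : c u y = C) (h3 : c u z = C)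
    (h4 : c w y = C) (h5 : c w z = C) :
    ∃ x1 x2 x3 x4 : Fin 17,
      x1 ≠ x2 ∧ x1 ≠ x3 ∧ x1 ≠ x4 ∧ x2 ≠ x3 ∧ x2 ≠ x4 ∧ x3 ≠ x4 ∧
      c x1 x2 = c x1 x3 ∧ c x1 x3 = c x2 x3 ∧ c x2 x3 = c x2 x4 ∧ c x2 x4 = c x3 x4 ∧
      ((if x1 < x2 then 1 else 0) + (if x3 < x2 then 1 else 0) + (if x4 < x2 then 1 else 0) : ℕ) = 1 := by
  refine ⟨y, w, u, z, (hwy.ne').symm.symm, (huw.trans hwy).ne', hyz,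
    huw.ne', hwz.ne, (huw.trans hwz).ne, ?_, ?_, ?_, ?_, ?_⟩
  · rw [hc y w, hc y u, h4, h2]
  · rw [hc y u, hc w u, h2, h1]
  · rw [hc w u, h1, h5]
  · rw [h5, h3]
  · rw [if_neg (asymm hwy), if_pos huw, if_neg (asymm hwz)]

private lemma bool_ne_eq_not {b C : Bool} (h : b ≠ C) : b = !C := by
  revert h; revert b C; decide

/-- The ordered Ramsey number of the (d₂,2)-ordering of the diamond graph is at most 17: every ordered 2-coloring on 17 vertices contains distinct vertices x1,x2,x3,x4 (playing d1,d2,d3,d4) whose five edges all have the same color and such that x2 is the 2nd smallest of the four (exactly one other chosen vertex is smaller). -/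
theorem ordered_ramsey_diamond_d2_2_le_seventeen
    (c : Fin 17 → Fin 17 → Bool) (hc : ∀ a b, c a b = c b a) :
    ∃ x1 x2 x3 x4 : Fin 17,
      x1 ≠ x2 ∧ x1 ≠ x3 ∧ x1 ≠ x4 ∧ x2 ≠ x3 ∧ x2 ≠ x4 ∧ x3 ≠ x4 ∧
      c x1 x2 = c x1 x3 ∧ c x1 x3 = c x2 x3 ∧ c x2 x3 = c x2 x4 ∧ c x2 x4 = c x3 x4 ∧
      ((if x1 < x2 then 1 else 0) + (if x3 < x2 then 1 else 0) + (if x4 < x2 then 1 else 0) : ℕ) = 1 := by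
  classical
  -- Step 1: majority color C at vertex 0, set S of ≥ 6 vertices (in fact 8).
  set S0 : Finset (Fin 17) := Finset.univ.erase 0 with hS0def
  have hS0card : S0.card = 16 := by decide
  obtain ⟨C, S, hScard, hSmem⟩ :
      ∃ (C : Bool) (S : Finset (Fin 17)), 6 ≤ S.card ∧ ∀ x ∈ S, (0:Fin 17) < x ∧ c 0 x = C := by
    have hpart := Finset.card_filter_add_card_filter_not
      (s := S0) (p := fun x => c 0 x = true)
    have hpos : ∀ x ∈ S0, (0:Fin 17) < x := fun x hx =>
      Fin.pos_of_ne_zero (Finset.ne_of_mem_erase hx)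
    rcases le_or_gt 6 ((S0.filter (fun x => c 0 x = true)).card) with h6 | h6
    · exact ⟨true, _, h6, fun x hx =>
        ⟨hpos x (Finset.mem_of_mem_filter x hx), (Finset.mem_filter.1 hx).2⟩⟩
    · refine ⟨false, S0.filter (fun x => ¬ (c 0 x = true)), by omega, fun x hx => ?_⟩
      exact ⟨hpos x (Finset.mem_of_mem_filter x hx),
        Bool.not_eq_true _ ▸ (Finset.mem_filter.1 hx).2⟩
  have hSne : S.Nonempty := Finset.card_pos.1 (by omega)
  set w : Fin 17 := S.min' hSne with hwdef
  have hwS : w ∈ S := S.min'_mem hSne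
  have hw0 : (0:Fin 17) < w := (hSmem w hwS).1
  have hw0c : c 0 w = C := (hSmem w hwS).2
  set S1 : Finset (Fin 17) := S.erase w with hS1def
  have hS1card : 5 ≤ S1.card := by
    rw [hS1def, Finset.card_erase_of_mem hwS]; omega
  have hS1gt : ∀ x ∈ S1, w < x := fun x hx =>
    lt_of_le_of_ne (S.min'_le x (Finset.mem_of_mem_erase hx))
      (Ne.symm (Finset.ne_of_mem_erase hx))
  -- Step 2: split S1 by the color of edges from w.
  have hpart1 := Finset.card_filter_add_card_filter_not
    (s := S1) (p := fun x => c w x = C)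
  rcases le_or_gt 2 ((S1.filter (fun x => c w x = C)).card) with h2 | h2
  · -- two C-neighbors of w inside S: finish with (0, w, y, z), color C
    obtain ⟨y, hy, z, hz, hyz⟩ := Finset.one_lt_card.1 h2
    obtain ⟨hyS1, hyc⟩ := Finset.mem_filter.1 hy
    obtain ⟨hzS1, hzc⟩ := Finset.mem_filter.1 hz
    exact diamond_F4 c hc 0 w y z hw0 (hS1gt y hyS1) (hS1gt z hzS1) hyz C
      hw0c (hSmem y (Finset.mem_of_mem_erase hyS1)).2
      (hSmem z (Finset.mem_of_mem_erase hzS1)).2 hyc hzc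
  · set T : Finset (Fin 17) := S1.filter (fun x => ¬ (c w x = C)) with hTdef
    have hTcard : 4 ≤ T.card := by omega
    have hTne : T.Nonempty := Finset.card_pos.1 (by omega)
    set w2 : Fin 17 := T.min' hTne with hw2def
    have hw2T : w2 ∈ T := T.min'_mem hTne
    have hw2S1 : w2 ∈ S1 := Finset.mem_of_mem_filter w2 hw2T
    have hw2gt : w < w2 := hS1gt w2 hw2S1
    have hw2S : w2 ∈ S := Finset.mem_of_mem_erase hw2S1
    have hww2c : c w w2 = !C := bool_ne_eq_not (Finset.mem_filter.1 hw2T).2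
    set T1 : Finset (Fin 17) := T.erase w2 with hT1def
    have hT1card : 3 ≤ T1.card := by
      rw [hT1def, Finset.card_erase_of_mem hw2T]; omega
    have hT1gt : ∀ x ∈ T1, w2 < x := fun x hx =>
      lt_of_le_of_ne (T.min'_le x (Finset.mem_of_mem_erase hx))
        (Ne.symm (Finset.ne_of_mem_erase hx))
    have hpart2 := Finset.card_filter_add_card_filter_not
      (s := T1) (p := fun x => c w2 x = C)
    rcases le_or_gt 2 ((T1.filter (fun x => c w2 x = C)).card) with h2' | h2'
    · -- two C-neighbors of w2 within T1 ⊆ S: finish with (0, w2, y, z), color C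
      obtain ⟨y, hy, z, hz, hyz⟩ := Finset.one_lt_card.1 h2'
      obtain ⟨hyT1, hyc⟩ := Finset.mem_filter.1 hy
      obtain ⟨hzT1, hzc⟩ := Finset.mem_filter.1 hz
      have hyS : y ∈ S := Finset.mem_of_mem_erase
        (Finset.mem_of_mem_filter y (Finset.mem_of_mem_erase hyT1))
      have hzS : z ∈ S := Finset.mem_of_mem_erase
        (Finset.mem_of_mem_filter z (Finset.mem_of_mem_erase hzT1))
      exact diamond_F4 c hc 0 w2 y z (hw0.trans hw2gt) (hT1gt y hyT1) (hT1gt z hzT1) hyz C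
        (hSmem w2 hw2S).2 (hSmem y hyS).2 (hSmem z hzS).2 hyc hzc
    · -- two (!C)-neighbors of w2 within T1 ⊆ T: finish with (w, w2, y, z), color !C
      have h2'' : 2 ≤ (T1.filter (fun x => ¬ (c w2 x = C))).card := by omega
      obtain ⟨y, hy, z, hz, hyz⟩ := Finset.one_lt_card.1 h2''
      obtain ⟨hyT1, hyc⟩ := Finset.mem_filter.1 hy
      obtain ⟨hzT1, hzc⟩ := Finset.mem_filter.1 hz
      have hyT : y ∈ T := Finset.mem_of_mem_erase hyT1
      have hzT : z ∈ T := Finset.mem_of_mem_erase hzT1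
      exact diamond_F4 c hc w w2 y z hw2gt (hT1gt y hyT1) (hT1gt z hzT1) hyz (!C)
        hww2c (bool_ne_eq_not (Finset.mem_filter.1 hyT).2)
        (bool_ne_eq_not (Finset.mem_filter.1 hzT).2)
        (bool_ne_eq_not hyc) (bool_ne_eq_not hzc)
end

section
/- The ordered Ramsey number of the (e_2,1)-ordering of the 3-pan equals 7: every ordered 2-coloring on 7 vertices contains distinct vertices x1,x2,x3,x4 such that the edges {x1,x2},{x2,x3},{x2,x4},{x3,x4} all have the same color and x2 is the smallest of x1,x2,x3,x4; and there exists an ordered 2-coloring on 6 vertices containing no such configuration. -/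
set_option maxRecDepth 100000

def lowC : Fin 6 → Fin 6 → Bool :=
  ![![false,false,false,false,true,true],
    ![false,false,true,true,false,false],
    ![false,true,false,true,false,false],
    ![false,true,true,false,false,false],
    ![true,false,false,false,false,false],
    ![true,false,false,false,false,false]]

lemma pigeon7 : ∀ g : Fin 7 → Bool, ∃ a b c : Fin 7,
    0 < a ∧ a < b ∧ b < c ∧ g a = g b ∧ g b = g c := by decide

lemma compl3 : ∀ a b c : Fin 7, 0 < a → a < b → b < c →
    ∃ d e f : Fin 7, 0 < d ∧ d < e ∧ e < f ∧
      d ≠ a ∧ d ≠ b ∧ d ≠ c ∧ e ≠ a ∧ e ≠ b ∧ e ≠ c ∧ f ≠ a ∧ f ≠ b ∧ f ≠ c ∧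
      (a = 1 ∨ d = 1) := by decide

section
variable {c : Fin 7 → Fin 7 → Bool}

def NoGood (c : Fin 7 → Fin 7 → Bool) : Prop :=
  ¬ ∃ v p q r : Fin 7, v < p ∧ v < q ∧ v < r ∧ p ≠ q ∧ p ≠ r ∧ q ≠ r ∧
      c v p = c v q ∧ c v q = c v r ∧ c v r = c q r

lemma ng {v p q r : Fin 7} (h : NoGood c) (h1 : v < p) (h2 : v < q) (h3 : v < r)
    (d1 : p ≠ q) (d2 : p ≠ r) (d3 : q ≠ r)
    (e1 : c v p = c v q) (e2 : c v q = c v r) : c v r ≠ c q r := by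
  intro e3; exact h ⟨v,p,q,r,h1,h2,h3,d1,d2,d3,e1,e2,e3⟩

lemma neBool {x y : Bool} (h : x ≠ y) : x = !y := by
  cases x <;> cases y <;> simp_all

lemma neBool2 {x y : Bool} (h : x ≠ !y) : x = y := by
  cases x <;> cases y <;> simp_all

lemma onelt {x : Fin 7} (h : 0 < x) (h2 : x ≠ 1) : 1 < x := by
  rw [Fin.lt_def] at h ⊢
  rw [Ne, Fin.ext_iff] at h2
  simp only [Fin.val_zero, Fin.val_one] at *
  omega

lemma key_s13 (hsym : ∀ a b, c a b = c b a) (hno : NoGood c)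
    (a b c' d e f : Fin 7)
    (h0a : 0 < a) (hab : a < b) (hbc : b < c')
    (h0d : 0 < d) (hde : d < e) (hef : e < f)
    (da : d ≠ a) (db : d ≠ b) (dc : d ≠ c')
    (ea : e ≠ a) (eb : e ≠ b) (ec : e ≠ c')
    (fa : f ≠ a) (fb : f ≠ b) (fc : f ≠ c')
    (hone : a = 1 ∨ d = 1)
    (hX1 : c 0 a = c 0 b) (hX2 : c 0 b = c 0 c') : False := by
  have hb : c 0 b = c 0 a := hX1.symm
  have hc : c 0 c' = c 0 a := (hX1.trans hX2).symm
  have h0b : (0 : Fin 7) < b := lt_trans h0a hab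
  have h0c : (0 : Fin 7) < c' := lt_trans h0b hbc
  have hac : a < c' := lt_trans hab hbc
  have h0e : (0 : Fin 7) < e := lt_trans h0d hde
  have h0f : (0 : Fin 7) < f := lt_trans h0e hef
  have hdf : d < f := lt_trans hde hef
  -- the triangle a b c' is colored oppositely to the star at 0
  have tab : c a b = !(c 0 a) := neBool (fun h => hno
    ⟨0, c', a, b, h0c, h0a, h0b, hac.ne', hbc.ne', hab.ne, hc, hX1, hb.trans h.symm⟩)
  have tac : c a c' = !(c 0 a) := neBool (fun h => hno
    ⟨0, b, a, c', h0b, h0a, h0c, hab.ne', hbc.ne, hac.ne, hb, hc.symm, hc.trans h.symm⟩)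
  have tbc : c b c' = !(c 0 a) := neBool (fun h => hno
    ⟨0, a, b, c', h0a, h0b, h0c, hab.ne, hac.ne, hbc.ne, hX1, hX2, hc.trans h.symm⟩)
  -- every other vertex is joined to 0 by the opposite color
  have step2 : ∀ w : Fin 7, 0 < w → w ≠ a → w ≠ b → w ≠ c' → c 0 w = !(c 0 a) := by
    intro w hw wa wb wc
    apply neBool
    intro hwX
    have h1 : c a w = !(c 0 a) := neBool (fun h => hno
      ⟨0, b, a, w, h0b, h0a, hw, hab.ne', wb.symm, wa.symm, hb, hwX.symm, hwX.trans h.symm⟩)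
    have h2 : c b w = !(c 0 a) := neBool (fun h => hno
      ⟨0, a, b, w, h0a, h0b, hw, hab.ne, wa.symm, wb.symm, hX1, hb.trans hwX.symm, hwX.trans h.symm⟩)
    have h3 : c c' w = !(c 0 a) := neBool (fun h => hno
      ⟨0, a, c', w, h0a, h0c, hw, hac.ne, wa.symm, wc.symm, hc.symm, hc.trans hwX.symm, hwX.trans h.symm⟩)
    rcases lt_trichotomy w a with hlt | heq | hgt
    · exact hno ⟨w, a, b, c', hlt, lt_trans hlt hab, lt_trans hlt hac, hab.ne, hac.ne, hbc.ne,
        by rw [hsym w a, hsym w b, h1, h2], by rw [hsym w b, hsym w c', h2, h3],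
        by rw [hsym w c', h3, tbc]⟩
    · exact wa heq
    · exact hno ⟨a, w, b, c', hgt, hab, hac, wb, wc, hbc.ne,
        by rw [h1, tab], by rw [tab, tac], by rw [tac, tbc]⟩
  have h0d' : c 0 d = !(c 0 a) := step2 d h0d da db dc
  have h0e' : c 0 e = !(c 0 a) := step2 e h0e ea eb ec
  have h0f' : c 0 f = !(c 0 a) := step2 f h0f fa fb fc
  -- the triangle d e f is colored like the star at 0
  have tde : c d e = c 0 a := neBool2 (fun h => hno
    ⟨0, f, d, e, h0f, h0d, h0e, hdf.ne', hef.ne', hde.ne,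
      h0f'.trans h0d'.symm, h0d'.trans h0e'.symm, h0e'.trans h.symm⟩)
  have tdf : c d f = c 0 a := neBool2 (fun h => hno
    ⟨0, e, d, f, h0e, h0d, h0f, hde.ne', hef.ne, hdf.ne,
      h0e'.trans h0d'.symm, h0d'.trans h0f'.symm, h0f'.trans h.symm⟩)
  have tef : c e f = c 0 a := neBool2 (fun h => hno
    ⟨0, d, e, f, h0d, h0e, h0f, hde.ne, hdf.ne, hef.ne,
      h0d'.trans h0e'.symm, h0e'.trans h0f'.symm, h0f'.trans h.symm⟩)
  rcases hone with ha1 | hd1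
  · subst ha1
    have hd1 : (1 : Fin 7) < d := onelt h0d da
    have he1 : (1 : Fin 7) < e := lt_trans hd1 hde
    have hf1 : (1 : Fin 7) < f := lt_trans hd1 hdf
    have cd : c 1 d = c 0 1 := neBool2 (fun h => hno
      ⟨1, d, b, c', hd1, hab, hac, db, dc, hbc.ne,
        h.trans tab.symm, tab.trans tac.symm, tac.trans tbc.symm⟩)
    have ce : c 1 e = c 0 1 := neBool2 (fun h => hno
      ⟨1, e, b, c', he1, hab, hac, eb, ec, hbc.ne,
        h.trans tab.symm, tab.trans tac.symm, tac.trans tbc.symm⟩)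
    have cf : c 1 f = c 0 1 := neBool2 (fun h => hno
      ⟨1, f, b, c', hf1, hab, hac, fb, fc, hbc.ne,
        h.trans tab.symm, tab.trans tac.symm, tac.trans tbc.symm⟩)
    exact hno ⟨1, d, e, f, hd1, he1, hf1, hde.ne, hdf.ne, hef.ne,
      cd.trans ce.symm, ce.trans cf.symm, cf.trans tef.symm⟩
  · subst hd1
    have ha1 : (1 : Fin 7) < a := onelt h0a da.symm
    have hb1 : (1 : Fin 7) < b := lt_trans ha1 hab
    have hc1 : (1 : Fin 7) < c' := lt_trans ha1 hac
    have ca : c 1 a = !(c 0 a) := neBool (fun h => hno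
      ⟨1, a, e, f, ha1, hde, hdf, ea.symm, fa.symm, hef.ne,
        h.trans tde.symm, tde.trans tdf.symm, tdf.trans tef.symm⟩)
    have cb : c 1 b = !(c 0 a) := neBool (fun h => hno
      ⟨1, b, e, f, hb1, hde, hdf, eb.symm, fb.symm, hef.ne,
        h.trans tde.symm, tde.trans tdf.symm, tdf.trans tef.symm⟩)
    have cc : c 1 c' = !(c 0 a) := neBool (fun h => hno
      ⟨1, c', e, f, hc1, hde, hdf, ec.symm, fc.symm, hef.ne,
        h.trans tde.symm, tde.trans tdf.symm, tdf.trans tef.symm⟩)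
    exact hno ⟨1, c', a, b, hc1, ha1, hb1, hac.ne', hbc.ne', hab.ne,
      cc.trans ca.symm, ca.trans cb.symm, cb.trans tab.symm⟩

end

/-- The ordered Ramsey number of the (e₂,1)-ordering of the 3-pan equals 7: every ordered 2-coloring on 7 vertices contains distinct vertices x1,x2,x3,x4 (playing e1,e2,e3,e4 of the 3-pan, edges {e1,e2},{e2,e3},{e2,e4},{e3,e4}) whose four edges all have the same color and such that x2 is the smallest of the four; and some ordered 2-coloring on 6 vertices contains no such configuration. -/
theorem ordered_ramsey_pan_e2_1_eq_seven :
    (∀ c : Fin 7 → Fin 7 → Bool, (∀ a b, c a b = c b a) →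
      ∃ x1 x2 x3 x4 : Fin 7,
        x1 ≠ x2 ∧ x1 ≠ x3 ∧ x1 ≠ x4 ∧ x2 ≠ x3 ∧ x2 ≠ x4 ∧ x3 ≠ x4 ∧
        c x1 x2 = c x2 x3 ∧ c x2 x3 = c x2 x4 ∧ c x2 x4 = c x3 x4 ∧
        ((if x1 < x2 then 1 else 0) + (if x3 < x2 then 1 else 0) + (if x4 < x2 then 1 else 0) : ℕ) = 0) ∧
    (∃ c : Fin 6 → Fin 6 → Bool, (∀ a b, c a b = c b a) ∧
      ¬ ∃ x1 x2 x3 x4 : Fin 6,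
        x1 ≠ x2 ∧ x1 ≠ x3 ∧ x1 ≠ x4 ∧ x2 ≠ x3 ∧ x2 ≠ x4 ∧ x3 ≠ x4 ∧
        c x1 x2 = c x2 x3 ∧ c x2 x3 = c x2 x4 ∧ c x2 x4 = c x3 x4 ∧
        ((if x1 < x2 then 1 else 0) + (if x3 < x2 then 1 else 0) + (if x4 < x2 then 1 else 0) : ℕ) = 0) := by
  constructor
  · intro c hsym
    by_cases hg : NoGood c
    · exfalso
      obtain ⟨a, b, c', h0a, hab, hbc, hX1, hX2⟩ := pigeon7 (c 0)
      obtain ⟨d, e, f, h0d, hde, hef, da, db, dc, ea, eb, ec, fa, fb, fc, hone⟩ :=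
        compl3 a b c' h0a hab hbc
      exact key_s13 hsym hg a b c' d e f h0a hab hbc h0d hde hef da db dc ea eb ec fa fb fc hone hX1 hX2
    · rw [NoGood, not_not] at hg
      obtain ⟨v, p, q, r, h1, h2, h3, d1, d2, d3, e1, e2, e3⟩ := hg
      refine ⟨p, v, q, r, (ne_of_lt h1).symm, d1, d2, ne_of_lt h2, ne_of_lt h3, d3,
        ?_, e2, e3, ?_⟩
      · rw [hsym p v]; exact e1
      · simp [not_lt_of_gt h1, not_lt_of_gt h2, not_lt_of_gt h3, asymm h1, asymm h2, asymm h3]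
  · exact ⟨lowC, by decide, by decide⟩
end

section
/- For any n ≥ 3 and any N, suppose that every 2-coloring of the edges of the complete graph on N vertices contains a monochromatic n-cycle (i.e., distinct vertices y1,…,yn with the edges {y1,y2},{y2,y3},…,{y_{n−1},y_n},{y_n,y1} all the same color). Then for any i,l ∈ {1,…,n}, every ordered 2-coloring on N vertices contains a monochromatic copy of the 1-ordering of the path P_n assigning order-label l to its i-th vertex; that is, there exist distinct vertices x1,…,xn with the edges {x1,x2},…,{x_{n−1},x_n} all the same color such that x_i is the l-th smallest of x1,…,xn. In particular, R_<(H) ≤ R(C_n) for every 1-ordering H of P_n. -/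
lemma exists_rank_aux {n N : ℕ} (y : Fin n → Fin N) (hy : Function.Injective y)
    (m : ℕ) (hm : m < n) :
    ∃ p, (Finset.univ.filter fun k => y k < y p).card = m := by
  have hcard : ∀ p : Fin n, (Finset.univ.filter fun k => y k < y p).card < n := by
    intro p
    have hsub : (Finset.univ.filter fun k => y k < y p) ⊆ Finset.univ.erase p := by
      intro k hk
      simp only [Finset.mem_filter] at hk
      refine Finset.mem_erase.mpr ⟨?_, Finset.mem_univ _⟩
      rintro rfl; exact lt_irrefl _ hk.2
    calc (Finset.univ.filter fun k => y k < y p).card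
        ≤ (Finset.univ.erase p).card := Finset.card_le_card hsub
      _ < n := by
        rw [Finset.card_erase_of_mem (Finset.mem_univ _), Finset.card_univ,
          Fintype.card_fin]
        omega
  have key : ∀ a b : Fin n, y a < y b →
      (Finset.univ.filter fun k => y k < y a).card
        < (Finset.univ.filter fun k => y k < y b).card := by
    intro a b hab
    apply Finset.card_lt_card
    rw [Finset.ssubset_iff_of_subset]
    · exact ⟨a, Finset.mem_filter.mpr ⟨Finset.mem_univ _, hab⟩, by
        simp only [Finset.mem_filter]
        exact fun h => lt_irrefl _ h.2⟩
    · intro k hk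
      simp only [Finset.mem_filter] at hk ⊢
      exact ⟨hk.1, hk.2.trans hab⟩
  set r : Fin n → Fin n := fun p => ⟨_, hcard p⟩ with hr
  have hrinj : Function.Injective r := by
    intro p q hpq
    by_contra hne
    have hyne : y p ≠ y q := fun h => hne (hy h)
    rcases lt_or_gt_of_ne hyne with h | h
    · exact absurd (congrArg Fin.val hpq) (Nat.ne_of_lt (key p q h))
    · exact absurd (congrArg Fin.val hpq) (Nat.ne_of_gt (key q p h))
  obtain ⟨p, hp⟩ := Finite.injective_iff_surjective.mp hrinj ⟨m, hm⟩
  exact ⟨p, congrArg Fin.val hp⟩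

/-- If every 2-coloring of the edges of the complete graph on `N` vertices contains a
monochromatic `n`-cycle (`n ≥ 3`), then for any `i, l ∈ {1, …, n}` every ordered 2-coloring
on `N` vertices contains a monochromatic copy of the 1-ordering of the path `Pₙ` assigning
order-label `l` to its `i`-th vertex: distinct vertices `x 0, …, x (n-1)` with all
consecutive edges the same color, in which the `(i-1)`-indexed vertex is the `l`-th
smallest (exactly `l - 1` of the chosen vertices are smaller than it).
In particular, `R_<(H) ≤ R(Cₙ)` for every 1-ordering `H` of `Pₙ`. -/
theorem ordered_ramsey_path_one_ordering_le_ramsey_cycle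
    (n N : ℕ) (hn : 3 ≤ n)
    (hcycle : ∀ c : Fin N → Fin N → Bool, (∀ a b, c a b = c b a) →
      ∃ y : Fin n → Fin N, Function.Injective y ∧ ∃ b : Bool,
        (∀ (j : ℕ) (h : j + 1 < n), c (y ⟨j, by omega⟩) (y ⟨j + 1, h⟩) = b) ∧
        c (y ⟨n - 1, by omega⟩) (y ⟨0, by omega⟩) = b) :
    ∀ (i l : ℕ) (hi : 1 ≤ i) (hi' : i ≤ n) (hl : 1 ≤ l) (hl' : l ≤ n),
      ∀ c : Fin N → Fin N → Bool, (∀ a b, c a b = c b a) →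
        ∃ x : Fin n → Fin N, Function.Injective x ∧
          (∃ b : Bool, ∀ (j : ℕ) (h : j + 1 < n), c (x ⟨j, by omega⟩) (x ⟨j + 1, h⟩) = b) ∧
          (Finset.univ.filter fun k => x k < x ⟨i - 1, by omega⟩).card = l - 1 := by
  intro i l hi hi' hl hl' c hsym
  obtain ⟨y, hyinj, b, hedge, hwrap⟩ := hcycle c hsym
  have hn0 : 0 < n := by omega
  obtain ⟨p, hp⟩ := exists_rank_aux y hyinj (l - 1) (by omega)
  haveI : NeZero n := ⟨by omega⟩
  set ρ : Fin n := ⟨(p.val + n - (i - 1)) % n, Nat.mod_lt _ hn0⟩ with hρ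
  set σ : Fin n ≃ Fin n := Equiv.addRight ρ with hσ
  have hσval : ∀ j : Fin n, (σ j).val = (j.val + ρ.val) % n := by
    intro j
    simp only [hσ, Equiv.coe_addRight, Fin.add_def]
  -- the rotation sends index i-1 to p
  have hfix : σ ⟨i - 1, by omega⟩ = p := by
    apply Fin.ext
    rw [hσval]
    simp only [hρ]
    rw [Nat.add_mod_mod]
    have h1 : i - 1 + (p.val + n - (i - 1)) = p.val + n := by omega
    rw [h1, Nat.add_mod_right, Nat.mod_eq_of_lt p.isLt]
  refine ⟨y ∘ σ, hyinj.comp σ.injective, ⟨b, ?_⟩, ?_⟩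
  · intro j hjn
    have htlt : (j + ρ.val) % n < n := Nat.mod_lt _ hn0
    have h1 : (σ ⟨j, by omega⟩).val = (j + ρ.val) % n := hσval _
    have h2 : (σ ⟨j + 1, hjn⟩).val = ((j + ρ.val) % n + 1) % n := by
      rw [hσval]
      show (j + 1 + ρ.val) % n = ((j + ρ.val) % n + 1) % n
      rw [Nat.mod_add_mod]
      congr 1
      omega
    obtain ⟨t, ht⟩ : ∃ t, (j + ρ.val) % n = t := ⟨_, rfl⟩
    rw [ht] at htlt h1 h2
    by_cases hcase : t + 1 < n
    · have e1 : σ ⟨j, by omega⟩ = ⟨t, htlt⟩ := Fin.ext h1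
      have e2 : σ ⟨j + 1, hjn⟩ = ⟨t + 1, hcase⟩ :=
        Fin.ext (h2.trans (Nat.mod_eq_of_lt hcase))
      simp only [Function.comp_apply, e1, e2]
      exact hedge t hcase
    · have htop : t = n - 1 := by omega
      have e1 : σ ⟨j, by omega⟩ = ⟨n - 1, by omega⟩ :=
        Fin.ext (h1.trans htop)
      have hz : (t + 1) % n = 0 := by
        have he : t + 1 = n := by omega
        rw [he, Nat.mod_self]
      have e2 : σ ⟨j + 1, hjn⟩ = ⟨0, by omega⟩ := Fin.ext (h2.trans hz)
      simp only [Function.comp_apply, e1, e2]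
      exact hwrap
  · have hset : (Finset.univ.filter fun k => (y ∘ σ) k < (y ∘ σ) ⟨i - 1, by omega⟩)
        = (Finset.univ.filter fun k => y k < y p).map σ.symm.toEmbedding := by
      ext k
      simp only [Finset.mem_filter, Finset.mem_map_equiv, Equiv.symm_symm,
        Finset.mem_univ, true_and, Function.comp_apply, hfix]
    rw [hset, Finset.card_map, hp]
end
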